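/- Let G be the spinal graph of Example 7 with spine ℕ, dimensions parameters δ > D > 1, α = (D−1)/δ, fibres π⁻¹(n) = B_{P_n}(o_n, n^α) with |B_{P_n}(x,r)| ≃ r^δ uniformly, and P_n doubling with uniform constants. Then there is a constant c > 0 such that for every vertex x ∈ V(G) and every integer r ≥ 1, |B_G(x, r)| ≥ c r^D. -/

import Mathlib

/-- The closed combinatorial ball of (real) radius `r` around `x`. -/
def gball {V : Type*} (G : SimpleGraph V) (x : V) (r : ℝ) : Set V :=
  {y | (G.dist x y : ℝ) ≤ r}

/-- The vertices of the fibre glued at `n ∈ ℕ`: the ball `B_{P n}(o n, n ^ α)`. -/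
def FibVert {W : ℕ → Type*} (P : ∀ n, SimpleGraph (W n)) (o : ∀ n, W n) (α : ℝ)
    (n : ℕ) : Type _ :=
  {z : W n // ((P n).dist (o n) z : ℝ) ≤ (n : ℝ) ^ α}

/-- The spinal graph over `Σ = ℕ` obtained by gluing, at each `n ∈ ℕ`, the induced
subgraph of `P n` on the ball `B_{P n}(o n, n ^ α)` to the vertex `n` of the path
graph `ℕ` at the distinguished point `o n`. -/
def SpineGlued {W : ℕ → Type*} (P : ∀ n, SimpleGraph (W n)) (o : ∀ n, W n) (α : ℝ) :
    SimpleGraph (Σ n, FibVert P o α n) :=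
  SimpleGraph.fromRel (fun p q =>
    (∃ h : p.1 = q.1, (P q.1).Adj (h ▸ p.2.1) q.2.1) ∨
    (p.2.1 = o p.1 ∧ q.2.1 = o q.1 ∧ q.1 = p.1 + 1))

namespace SpinalAux
section general
variable {V : Type*} {G : SimpleGraph V}



lemma exists_shortest_walk {u v : V} (h : G.Reachable u v) :
    ∃ w : G.Walk u v, w.length = G.dist u v ∧
      ∀ x ∈ w.support, G.dist u x + G.dist x v ≤ G.dist u v := by
  classical
  obtain ⟨w, hw⟩ := h.exists_walk_length_eq_dist
  refine ⟨w, hw, fun x hx => ?_⟩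
  have h1 := SimpleGraph.dist_le (w.takeUntil x hx)
  have h2 := SimpleGraph.dist_le (w.dropUntil x hx)
  have h3 : (w.takeUntil x hx).length + (w.dropUntil x hx).length = w.length := by
    rw [← SimpleGraph.Walk.length_append, w.take_spec hx]
  omega

lemma exists_adj_dist_lt {u v : V} (h : G.Reachable u v) (hd : 0 < G.dist u v) :
    ∃ u', G.Adj u u' ∧ G.dist u' v + 1 = G.dist u v := by
  obtain ⟨w, hw, -⟩ := exists_shortest_walk h
  cases w with
  | nil => simp at hd
  | @cons _ u' _ h' p =>
      refine ⟨u', h', ?_⟩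
      simp only [SimpleGraph.Walk.length_cons] at hw
      have h1 : G.dist u' v ≤ p.length := SimpleGraph.dist_le p
      obtain ⟨q, hq⟩ := (p.reachable).exists_walk_length_eq_dist
      have h2 : G.dist u v ≤ q.length + 1 := by
        have := SimpleGraph.dist_le (SimpleGraph.Walk.cons h' q)
        simpa using this
      omega

lemma exists_intermediate (hc : G.Connected) (u v : V) (m : ℕ) :
    ∃ y, G.dist u y ≤ G.dist u v - m ∧ G.dist y v ≤ m := by
  induction m with
  | zero => exact ⟨v, by simp, by simp⟩
  | succ m ih =>
      obtain ⟨y, h1, h2⟩ := ih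
      by_cases hy : G.dist u y ≤ G.dist u v - (m + 1)
      · exact ⟨y, hy, le_trans h2 (by omega)⟩
      · have hpos : 0 < G.dist u y := by omega
        have hpos' : 0 < G.dist y u := by rwa [SimpleGraph.dist_comm]
        obtain ⟨y', ha, hd⟩ := exists_adj_dist_lt (hc y u) hpos'
        refine ⟨y', ?_, ?_⟩
        · have e1 : G.dist u y' = G.dist y' u := SimpleGraph.dist_comm
          have e2 : G.dist u y = G.dist y u := SimpleGraph.dist_comm
          omega
        · have htr : G.dist y' v ≤ G.dist y' y + G.dist y v := hc.dist_triangle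
          have hyy : G.dist y' y ≤ 1 := by
            have := SimpleGraph.dist_le (SimpleGraph.Walk.cons ha.symm SimpleGraph.Walk.nil)
            simpa using this
          omega

end general

variable {W : ℕ → Type*} (P : ∀ n, SimpleGraph (W n)) (o : ∀ n, W n) (α : ℝ)

def oFib (n : ℕ) : FibVert P o α n :=
  ⟨o n, by simp only [SimpleGraph.dist_self, Nat.cast_zero]; positivity⟩

lemma fib_adj {n : ℕ} {p q : FibVert P o α n} (h : (P n).Adj p.1 q.1) :
    (SpineGlued P o α).Adj ⟨n, p⟩ ⟨n, q⟩ := by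
  rw [SpineGlued, SimpleGraph.fromRel_adj]
  refine ⟨?_, Or.inl (Or.inl ⟨rfl, h⟩)⟩
  intro hc
  injection hc with h1 h2
  exact h.ne (congrArg Subtype.val h2)

lemma spine_adj (n : ℕ) :
    (SpineGlued P o α).Adj ⟨n, oFib P o α n⟩ ⟨n + 1, oFib P o α (n + 1)⟩ := by
  rw [SpineGlued, SimpleGraph.fromRel_adj]
  refine ⟨?_, Or.inl (Or.inr ⟨rfl, rfl, rfl⟩)⟩
  intro hc
  injection hc with h1 h2
  omega

lemma adj_fst {p q : Σ n, FibVert P o α n} (h : (SpineGlued P o α).Adj p q) :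
    p.1 = q.1 ∨ q.1 = p.1 + 1 ∨ p.1 = q.1 + 1 := by
  rw [SpineGlued, SimpleGraph.fromRel_adj] at h
  rcases h.2 with (⟨h', -⟩ | ⟨-, -, h'⟩) | (⟨h', -⟩ | ⟨-, -, h'⟩) <;> omega

lemma fst_le_walk {p q : Σ n, FibVert P o α n} (Wg : (SpineGlued P o α).Walk p q) :
    q.1 ≤ p.1 + Wg.length := by
  induction Wg with
  | nil => simp
  | cons h w ih =>
      have := adj_fst P o α h
      simp only [SimpleGraph.Walk.length_cons]
      omega

lemma lift_walk {n : ℕ} {a b : W n} (w : (P n).Walk a b) :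
    (∀ v ∈ w.support, ((P n).dist (o n) v : ℝ) ≤ (n : ℝ) ^ α) →
    ∀ (ha : ((P n).dist (o n) a : ℝ) ≤ (n : ℝ) ^ α)
      (hb : ((P n).dist (o n) b : ℝ) ≤ (n : ℝ) ^ α),
    ∃ Wg : (SpineGlued P o α).Walk ⟨n, ⟨a, ha⟩⟩ ⟨n, ⟨b, hb⟩⟩, Wg.length = w.length := by
  induction w with
  | nil => intro _ ha hb; exact ⟨SimpleGraph.Walk.nil, rfl⟩
  | @cons u u' _ h p ih =>
      intro hw ha hb
      have hm : ∀ v ∈ p.support, ((P n).dist (o n) v : ℝ) ≤ (n : ℝ) ^ α := by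
        intro v hv; exact hw v (by simp [SimpleGraph.Walk.support_cons, hv])
      have ha' : ((P n).dist (o n) u' : ℝ) ≤ (n : ℝ) ^ α :=
        hm u' p.start_mem_support
      obtain ⟨Wg, hWg⟩ := ih hm ha' hb
      exact ⟨SimpleGraph.Walk.cons (fib_adj P o α (p := ⟨u, ha⟩) (q := ⟨u', ha'⟩) h) Wg,
        by simp [hWg]⟩

lemma spine_walk (n j : ℕ) :
    ∃ Wg : (SpineGlued P o α).Walk ⟨n, oFib P o α n⟩ ⟨n + j, oFib P o α (n + j)⟩,
      Wg.length = j := by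
  induction j with
  | zero => exact ⟨SimpleGraph.Walk.nil, rfl⟩
  | succ j ih =>
      obtain ⟨Wg, h⟩ := ih
      exact ⟨Wg.concat (spine_adj P o α (n + j)),
        by simp [SimpleGraph.Walk.length_concat, h]⟩

lemma center_to_point (hconn : ∀ n, (P n).Connected) {n : ℕ} (z : FibVert P o α n) :
    ∃ Wg : (SpineGlued P o α).Walk ⟨n, oFib P o α n⟩ ⟨n, z⟩,
      Wg.length = (P n).dist (o n) z.1 := by
  obtain ⟨w, hwl, hws⟩ := exists_shortest_walk ((hconn n).preconnected (o n) z.1)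
  have hsup : ∀ v ∈ w.support, ((P n).dist (o n) v : ℝ) ≤ (n : ℝ) ^ α := by
    intro v hv
    have h1 := hws v hv
    have h2 : ((P n).dist (o n) z.1 : ℝ) ≤ (n : ℝ) ^ α := z.2
    have h3 : ((P n).dist (o n) v : ℝ) ≤ ((P n).dist (o n) z.1 : ℝ) := by
      exact_mod_cast (by omega : (P n).dist (o n) v ≤ (P n).dist (o n) z.1)
    linarith
  have ho : ((P n).dist (o n) (o n) : ℝ) ≤ (n : ℝ) ^ α := (oFib P o α n).2
  obtain ⟨Wg, hWg⟩ := lift_walk P o α w hsup ho z.2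
  exact ⟨Wg, hWg.trans hwl⟩

lemma glued_connected (hconn : ∀ n, (P n).Connected) :
    (SpineGlued P o α).Connected := by
  have key : ∀ p : Σ n, FibVert P o α n,
      (SpineGlued P o α).Reachable ⟨0, oFib P o α 0⟩ p := by
    rintro ⟨n, z⟩
    have h1 : (SpineGlued P o α).Reachable ⟨0, oFib P o α 0⟩ ⟨n, oFib P o α n⟩ := by
      obtain ⟨Wg, -⟩ := spine_walk P o α 0 n
      have hn : 0 + n = n := Nat.zero_add n
      exact hn ▸ ⟨Wg⟩
    have h2 : (SpineGlued P o α).Reachable ⟨n, oFib P o α n⟩ ⟨n, z⟩ := by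
      obtain ⟨Wg, -⟩ := center_to_point P o α hconn z
      exact ⟨Wg⟩
    exact h1.trans h2
  haveI : Nonempty (Σ n, FibVert P o α n) := ⟨⟨0, oFib P o α 0⟩⟩
  exact ⟨fun p q => (key p).symm.trans (key q)⟩

lemma ball_finite {δ c : ℝ} (hc : 0 < c)
    (hvol : ∀ (n : ℕ) (x : W n) (r : ℕ), 1 ≤ r →
      c * (r : ℝ) ^ δ ≤ ((gball (P n) x r).ncard : ℝ))
    (n : ℕ) (x : W n) (ρ : ℝ) : (gball (P n) x ρ).Finite := by
  set r : ℕ := ⌈ρ⌉₊ + 1 with hr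
  have hsub : gball (P n) x ρ ⊆ gball (P n) x (r : ℝ) := by
    intro y hy
    simp only [gball, Set.mem_setOf_eq] at hy ⊢
    refine le_trans hy ?_
    have h := Nat.le_ceil ρ
    have : ((⌈ρ⌉₊ : ℝ)) ≤ (r : ℝ) := by exact_mod_cast Nat.le_succ _
    linarith
  refine Set.Finite.subset ?_ hsub
  by_contra hinf
  have h0 : (gball (P n) x (r : ℝ)).ncard = 0 := Set.Infinite.ncard hinf
  have h1 := hvol n x r (by omega)
  rw [h0] at h1
  have hrpos : (0:ℝ) < (r:ℝ) := by exact_mod_cast Nat.succ_pos _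
  have h2 : (0:ℝ) < c * (r:ℝ) ^ δ := mul_pos hc (Real.rpow_pos_of_pos hrpos δ)
  norm_num at h1
  linarith

lemma fib_finite {δ c : ℝ} (hc : 0 < c)
    (hvol : ∀ (n : ℕ) (x : W n) (r : ℕ), 1 ≤ r →
      c * (r : ℝ) ^ δ ≤ ((gball (P n) x r).ncard : ℝ)) (n : ℕ) :
    Finite (FibVert P o α n) :=
  (ball_finite P (δ := δ) (c := c) hc hvol n (o n) ((n : ℝ) ^ α)).to_subtype

lemma glued_ball_finite (hconn : ∀ n, (P n).Connected)
    (hfib : ∀ n, Finite (FibVert P o α n))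
    (x : Σ n, FibVert P o α n) (r : ℕ) :
    (gball (SpineGlued P o α) x (r : ℝ)).Finite := by
  have hsub : gball (SpineGlued P o α) x (r : ℝ) ⊆
      ⋃ m ∈ Finset.range (x.1 + r + 1),
        Sigma.mk m '' (Set.univ : Set (FibVert P o α m)) := by
    intro y hy
    simp only [gball, Set.mem_setOf_eq] at hy
    have hd : (SpineGlued P o α).dist x y ≤ r := by exact_mod_cast hy
    obtain ⟨w, hw⟩ :=
      ((glued_connected P o α hconn).preconnected x y).exists_walk_length_eq_dist
    have h1 := fst_le_walk P o α w
    have h2 : y.1 ∈ Finset.range (x.1 + r + 1) := by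
      rw [Finset.mem_range]; omega
    simp only [Set.mem_iUnion]
    exact ⟨y.1, h2, y.2, trivial, (by cases y; rfl)⟩
  refine Set.Finite.subset ?_ hsub
  apply Set.Finite.biUnion (Finset.range _).finite_toSet
  intro m _
  haveI := hfib m
  exact Set.finite_univ.image _

lemma ncard_fib_image {m : ℕ} (B : Set (W m))
    (hB : ∀ w ∈ B, ((P m).dist (o m) w : ℝ) ≤ (m : ℝ) ^ α) :
    (Sigma.mk m '' (Subtype.val ⁻¹' B : Set (FibVert P o α m))).ncard = B.ncard := by
  rw [Set.ncard_image_of_injective _ sigma_mk_injective]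
  have hval : (Subtype.val '' (Subtype.val ⁻¹' B : Set (FibVert P o α m))) = B := by
    ext w
    constructor
    · rintro ⟨p, hp, rfl⟩
      exact hp
    · intro hw
      exact ⟨⟨w, hB w hw⟩, hw, rfl⟩
  conv_rhs => rw [← hval]
  exact (Set.ncard_image_of_injective (f := (Subtype.val : FibVert P o α m → W m)) _
    Subtype.val_injective).symm

end SpinalAux

theorem stmt_18 {W : ℕ → Type*} (P : ∀ n, SimpleGraph (W n)) (o : ∀ n, W n)
    (hconn : ∀ n, (P n).Connected)
    (δ D α : ℝ) (hD : 1 < D) (hδ : D < δ) (hα : α = (D - 1) / δ)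
    (c C : ℝ) (hc : 0 < c) (hC : 0 < C)
    (hvol : ∀ (n : ℕ) (x : W n) (r : ℕ), 1 ≤ r →
      c * (r : ℝ) ^ δ ≤ ((gball (P n) x r).ncard : ℝ) ∧
        ((gball (P n) x r).ncard : ℝ) ≤ C * (r : ℝ) ^ δ)
    -- the graphs `P n` are doubling, with constants uniform in `n`:
    (Cd ν : ℝ) (hCd : 0 < Cd) (hν : 0 < ν)
    (hdoub : ∀ (n : ℕ) (x : W n) (r R : ℝ), 0 < r → r < R →
      ((gball (P n) x R).ncard : ℝ) ≤ Cd * (R / r) ^ ν * ((gball (P n) x r).ncard : ℝ)) :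
    ∃ c' : ℝ, 0 < c' ∧ ∀ (x : Σ n, FibVert P o α n) (r : ℕ), 1 ≤ r →
      c' * (r : ℝ) ^ D ≤ ((gball (SpineGlued P o α) x (r : ℝ)).ncard : ℝ) := by
  classical
  have hδ0 : (0:ℝ) < δ := by linarith
  have hα0 : 0 ≤ α := by rw [hα]; apply div_nonneg <;> linarith
  have hα1 : α ≤ 1 := by rw [hα, div_le_one hδ0]; linarith
  have hαδ : α * δ = D - 1 := by rw [hα]; field_simp
  have hD0 : (0:ℝ) < D := by linarith
  have hvol1 : ∀ (n : ℕ) (x : W n) (r : ℕ), 1 ≤ r →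
      c * (r : ℝ) ^ δ ≤ ((gball (P n) x r).ncard : ℝ) := fun n x r hr => (hvol n x r hr).1
  have hfib : ∀ n, Finite (FibVert P o α n) := SpinalAux.fib_finite P o α hc hvol1
  have hGfin : ∀ (x : Σ n, FibVert P o α n) (r : ℕ),
      (gball (SpineGlued P o α) x (r : ℝ)).Finite :=
    SpinalAux.glued_ball_finite P o α hconn hfib
  have h16 : (0:ℝ) < (16:ℝ) ^ D := Real.rpow_pos_of_pos (by norm_num) D
  have h2δ : (0:ℝ) < (2:ℝ) ^ δ := Real.rpow_pos_of_pos (by norm_num) δ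
  have h32 : (0:ℝ) < (32:ℝ) ^ D := Real.rpow_pos_of_pos (by norm_num) D
  set c' : ℝ := min (c / ((16:ℝ) ^ D * (2:ℝ) ^ δ)) (((32:ℝ) ^ D)⁻¹) with hc'def
  have hc'0 : 0 < c' := lt_min (div_pos hc (mul_pos h16 h2δ)) (inv_pos.mpr h32)
  refine ⟨c', hc'0, ?_⟩
  rintro ⟨n, z⟩ r hr
  by_cases hsmall : r < 32
  · -- small radii: use the center itself
    have hmem : (⟨n, z⟩ : Σ n, FibVert P o α n) ∈
        gball (SpineGlued P o α) ⟨n, z⟩ (r : ℝ) := by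
      simp only [gball, Set.mem_setOf_eq, SimpleGraph.dist_self, Nat.cast_zero]
      positivity
    have h1 : (1:ℝ) ≤ ((gball (SpineGlued P o α) ⟨n, z⟩ (r : ℝ)).ncard : ℝ) := by
      have := (Set.ncard_pos (hGfin ⟨n, z⟩ r)).mpr ⟨_, hmem⟩
      exact_mod_cast this
    have hle : c' * (r : ℝ) ^ D ≤ 1 := by
      have hr32 : (r : ℝ) ≤ 32 := by exact_mod_cast hsmall.le
      have hrD : (r : ℝ) ^ D ≤ (32:ℝ) ^ D :=
        Real.rpow_le_rpow (by positivity) hr32 hD0.le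
      calc c' * (r : ℝ) ^ D ≤ ((32:ℝ) ^ D)⁻¹ * (32:ℝ) ^ D := by
            apply mul_le_mul (min_le_right _ _) hrD (by positivity) (by positivity)
        _ = 1 := inv_mul_cancel₀ (ne_of_gt h32)
    linarith
  push_neg at hsmall
  set k := (P n).dist (o n) z.1 with hk
  set m := (r + 1) / 2 with hm
  have hkα : ((k : ℕ) : ℝ) ≤ (n : ℝ) ^ α := z.2
  by_cases hcase : m ≤ k
  · -- Case 1: deep inside a large fibre
    obtain ⟨y, hy1, hy2⟩ := SpinalAux.exists_intermediate (hconn n) (o n) z.1 m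
    set t := r / 4 with ht
    have ht1 : 1 ≤ t := by omega
    have htm : t ≤ m := by omega
    have hyα : ((P n).dist (o n) y : ℝ) ≤ (n : ℝ) ^ α := by
      have h1 : (P n).dist (o n) y ≤ k := by omega
      exact le_trans (Nat.cast_le.mpr h1) hkα
    have hset : ∀ w ∈ gball (P n) y (t : ℝ),
        ((P n).dist (o n) w : ℝ) ≤ (n : ℝ) ^ α := by
      intro w hw
      simp only [gball, Set.mem_setOf_eq] at hw
      have hw' : (P n).dist y w ≤ t := by exact_mod_cast hw
      have htr : (P n).dist (o n) w ≤ (P n).dist (o n) y + (P n).dist y w :=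
        (hconn n).dist_triangle
      have h1 : (P n).dist (o n) w ≤ k := by omega
      exact le_trans (Nat.cast_le.mpr h1) hkα
    set S : Set (Σ n, FibVert P o α n) :=
      Sigma.mk n '' (Subtype.val ⁻¹' gball (P n) y (t : ℝ)) with hS
    have hcard : S.ncard = (gball (P n) y (t : ℝ)).ncard :=
      SpinalAux.ncard_fib_image P o α _ hset
    have hsub : S ⊆ gball (SpineGlued P o α) ⟨n, z⟩ (r : ℝ) := by
      rintro _ ⟨p, hp, rfl⟩
      simp only [Set.mem_preimage, gball, Set.mem_setOf_eq] at hp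
      have hp' : (P n).dist y p.1 ≤ t := by exact_mod_cast hp
      obtain ⟨w1, hw1l, hw1s⟩ :=
        SpinalAux.exists_shortest_walk ((hconn n).preconnected z.1 y)
      obtain ⟨w2, hw2l, hw2s⟩ :=
        SpinalAux.exists_shortest_walk ((hconn n).preconnected y p.1)
      have hd_zy : (P n).dist z.1 y ≤ m := by
        have : (P n).dist z.1 y = (P n).dist y z.1 := SimpleGraph.dist_comm
        omega
      have hs1 : ∀ v ∈ w1.support, ((P n).dist (o n) v : ℝ) ≤ (n : ℝ) ^ α := by
        intro v hv
        have h1 := hw1s v hv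
        have htr : (P n).dist (o n) v ≤ (P n).dist (o n) y + (P n).dist y v :=
          (hconn n).dist_triangle
        have hvy : (P n).dist y v = (P n).dist v y := SimpleGraph.dist_comm
        have h2 : (P n).dist (o n) v ≤ k := by omega
        exact le_trans (Nat.cast_le.mpr h2) hkα
      have hs2 : ∀ v ∈ w2.support, ((P n).dist (o n) v : ℝ) ≤ (n : ℝ) ^ α := by
        intro v hv
        have h1 := hw2s v hv
        have htr : (P n).dist (o n) v ≤ (P n).dist (o n) y + (P n).dist y v :=
          (hconn n).dist_triangle
        have h2 : (P n).dist (o n) v ≤ k := by omega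
        exact le_trans (Nat.cast_le.mpr h2) hkα
      obtain ⟨W1, hW1⟩ := SpinalAux.lift_walk P o α w1 hs1 z.2 hyα
      obtain ⟨W2, hW2⟩ := SpinalAux.lift_walk P o α w2 hs2 hyα p.2
      have hdist := SimpleGraph.dist_le (W1.append W2)
      have hlen : (W1.append W2).length ≤ r := by
        rw [SimpleGraph.Walk.length_append, hW1, hW2, hw1l, hw2l]
        omega
      simp only [gball, Set.mem_setOf_eq]
      have hfin2 : (SpineGlued P o α).dist ⟨n, z⟩ ⟨n, p⟩ ≤ r := le_trans hdist hlen
      exact_mod_cast hfin2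
    have hfin := hGfin ⟨n, z⟩ r
    have hle1 : ((gball (P n) y (t : ℝ)).ncard : ℝ) ≤
        ((gball (SpineGlued P o α) ⟨n, z⟩ (r : ℝ)).ncard : ℝ) := by
      rw [← hcard]
      exact_mod_cast Set.ncard_le_ncard hsub hfin
    have hvolt := hvol1 n y t ht1
    have ht1' : (1:ℝ) ≤ (t : ℝ) := by exact_mod_cast ht1
    have ht8 : (r : ℝ) ≤ 8 * (t : ℝ) := by
      have h4 : r ≤ 4 * t + 3 := by omega
      have h4' : (r : ℝ) ≤ ((4 * t + 3 : ℕ) : ℝ) := by exact_mod_cast h4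
      push_cast at h4'
      linarith
    have hkey : c' * (r : ℝ) ^ D ≤ c * (t : ℝ) ^ δ := by
      have h0t : (0:ℝ) ≤ (t : ℝ) := by positivity
      have hrD : (r : ℝ) ^ D ≤ (8 * (t : ℝ)) ^ D :=
        Real.rpow_le_rpow (by positivity) ht8 hD0.le
      have hmul : ((8:ℝ) * (t : ℝ)) ^ D = (8:ℝ) ^ D * (t : ℝ) ^ D :=
        Real.mul_rpow (by norm_num) h0t
      have htDδ : (t : ℝ) ^ D ≤ (t : ℝ) ^ δ :=
        Real.rpow_le_rpow_of_exponent_le ht1' (le_of_lt hδ)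
      have h8D : (0:ℝ) < (8:ℝ) ^ D := Real.rpow_pos_of_pos (by norm_num) D
      have h2δ1 : (1:ℝ) ≤ (2:ℝ) ^ δ := Real.one_le_rpow one_le_two hδ0.le
      have h816 : (8:ℝ) ^ D ≤ (16:ℝ) ^ D * (2:ℝ) ^ δ := by
        have h1 : (8:ℝ) ^ D ≤ (16:ℝ) ^ D :=
          Real.rpow_le_rpow (by norm_num) (by norm_num) hD0.le
        nlinarith
      have hc'8 : c' * (8:ℝ) ^ D ≤ c := by
        have h1 : c / ((16:ℝ) ^ D * (2:ℝ) ^ δ) ≤ c / (8:ℝ) ^ D :=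
          div_le_div_of_nonneg_left hc.le h8D h816
        have h2 : c' ≤ c / (8:ℝ) ^ D := le_trans (min_le_left _ _) h1
        calc c' * (8:ℝ) ^ D ≤ (c / (8:ℝ) ^ D) * (8:ℝ) ^ D :=
              mul_le_mul_of_nonneg_right h2 h8D.le
          _ = c := div_mul_cancel₀ c (ne_of_gt h8D)
      calc c' * (r : ℝ) ^ D ≤ c' * ((8:ℝ) ^ D * (t : ℝ) ^ D) :=
            mul_le_mul_of_nonneg_left (le_of_le_of_eq hrD hmul) hc'0.le
        _ = (c' * (8:ℝ) ^ D) * (t : ℝ) ^ D := by ring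
        _ ≤ c * (t : ℝ) ^ D := mul_le_mul_of_nonneg_right hc'8 (by positivity)
        _ ≤ c * (t : ℝ) ^ δ := mul_le_mul_of_nonneg_left htDδ hc.le
    linarith
  · -- Case 2: go along the spine
    push_neg at hcase
    set s := r / 2 with hs
    set q := s / 4 with hq
    have hq4 : 4 ≤ q := by omega
    have hq0 : (0:ℝ) < (q : ℝ) := by exact_mod_cast (by omega : 0 < q)
    have hq1 : (1:ℝ) ≤ (q : ℝ) := by exact_mod_cast (by omega : 1 ≤ q)
    have hqα1 : (1:ℝ) ≤ (q : ℝ) ^ α := Real.one_le_rpow hq1 hα0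
    set t := ⌊(q : ℝ) ^ α⌋₊ with htdef
    have ht1 : 1 ≤ t := Nat.le_floor (by exact_mod_cast hqα1)
    have htqα : (t : ℝ) ≤ (q : ℝ) ^ α := Nat.floor_le (by positivity)
    have htq : t ≤ q := by
      have h1 : (q : ℝ) ^ α ≤ (q : ℝ) := by
        calc (q : ℝ) ^ α ≤ (q : ℝ) ^ (1:ℝ) :=
              Real.rpow_le_rpow_of_exponent_le hq1 hα1
          _ = (q : ℝ) := Real.rpow_one _
      exact_mod_cast le_trans htqα h1
    have ht2 : (q : ℝ) ^ α / 2 ≤ (t : ℝ) := by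
      rcases le_or_gt ((q : ℝ) ^ α) 2 with h | h
      · have h1 : (1:ℝ) ≤ (t : ℝ) := by exact_mod_cast ht1
        linarith
      · have h1 := Nat.sub_one_lt_floor ((q : ℝ) ^ α)
        linarith
    set J := Finset.Icc q (2 * q) with hJ
    set Sj : ℕ → Set (Σ n, FibVert P o α n) := fun j =>
      Sigma.mk (n + j) '' (Subtype.val ⁻¹' gball (P (n + j)) (o (n + j)) (t : ℝ)) with hSj
    have hBsub : ∀ j ∈ J, ∀ w ∈ gball (P (n + j)) (o (n + j)) (t : ℝ),
        ((P (n + j)).dist (o (n + j)) w : ℝ) ≤ ((n + j : ℕ) : ℝ) ^ α := by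
      intro j hj w hw
      simp only [gball, Set.mem_setOf_eq] at hw
      have hjq : q ≤ j := by
        rw [hJ, Finset.mem_Icc] at hj
        omega
      have hqj : (q : ℝ) ≤ ((n + j : ℕ) : ℝ) := by
        have : q ≤ n + j := by omega
        exact_mod_cast this
      have h2 : (q : ℝ) ^ α ≤ ((n + j : ℕ) : ℝ) ^ α :=
        Real.rpow_le_rpow hq0.le hqj hα0
      linarith
    have hcardj : ∀ j ∈ J, (Sj j).ncard = (gball (P (n + j)) (o (n + j)) (t : ℝ)).ncard :=
      fun j hj => SpinalAux.ncard_fib_image P o α _ (hBsub j hj)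
    have hsubj : ∀ j ∈ J, Sj j ⊆ gball (SpineGlued P o α) ⟨n, z⟩ (r : ℝ) := by
      intro j hj
      rintro _ ⟨p, hp, rfl⟩
      simp only [Set.mem_preimage, gball, Set.mem_setOf_eq] at hp
      have hp' : (P (n + j)).dist (o (n + j)) p.1 ≤ t := by exact_mod_cast hp
      obtain ⟨W1, hW1⟩ := SpinalAux.center_to_point P o α hconn z
      obtain ⟨W2, hW2⟩ := SpinalAux.spine_walk P o α n j
      obtain ⟨W3, hW3⟩ := SpinalAux.center_to_point P o α hconn p
      have hj2 : j ≤ 2 * q := by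
        rw [hJ, Finset.mem_Icc] at hj
        omega
      have hdist := SimpleGraph.dist_le (W1.reverse.append (W2.append W3))
      have hlen : (W1.reverse.append (W2.append W3)).length ≤ r := by
        simp only [SimpleGraph.Walk.length_append, SimpleGraph.Walk.length_reverse,
          hW1, hW2, hW3]
        omega
      simp only [gball, Set.mem_setOf_eq]
      have hfin2 : (SpineGlued P o α).dist ⟨n, z⟩ ⟨n + j, p⟩ ≤ r := le_trans hdist hlen
      exact_mod_cast hfin2
    have hSjfin : ∀ j, (Sj j).Finite := by
      intro j
      haveI := hfib (n + j)
      exact (Set.toFinite _).image _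
    set Fj : ℕ → Finset (Σ n, FibVert P o α n) := fun j => (hSjfin j).toFinset with hFj
    have hdisj : ∀ j1 ∈ J, ∀ j2 ∈ J, j1 ≠ j2 → Disjoint (Fj j1) (Fj j2) := by
      intro j1 _ j2 _ hne
      rw [Finset.disjoint_left]
      intro a ha1 ha2
      simp only [hFj, Set.Finite.mem_toFinset, hSj] at ha1 ha2
      obtain ⟨p1, -, rfl⟩ := ha1
      obtain ⟨p2, -, he⟩ := ha2
      have := congrArg Sigma.fst he
      simp only at this
      omega
    have hfin := hGfin ⟨n, z⟩ r
    have hunion : J.biUnion Fj ⊆ hfin.toFinset := by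
      intro a ha
      rw [Finset.mem_biUnion] at ha
      obtain ⟨j, hj, haj⟩ := ha
      rw [Set.Finite.mem_toFinset]
      exact hsubj j hj (by simpa [hFj, Set.Finite.mem_toFinset] using haj)
    have hcount : ∑ j ∈ J, (Fj j).card ≤
        (gball (SpineGlued P o α) ⟨n, z⟩ (r : ℝ)).ncard := by
      rw [← Finset.card_biUnion hdisj, Set.ncard_eq_toFinset_card _ hfin]
      exact Finset.card_le_card hunion
    have hterm : ∀ j ∈ J, c * (t : ℝ) ^ δ ≤ ((Fj j).card : ℝ) := by
      intro j hj
      have h1 := hvol1 (n + j) (o (n + j)) t ht1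
      have h2 : (Fj j).card = (Sj j).ncard :=
        (Set.ncard_eq_toFinset_card _ (hSjfin j)).symm
      rw [h2, hcardj j hj]
      exact h1
    have hsum : (J.card : ℝ) * (c * (t : ℝ) ^ δ) ≤
        ((gball (SpineGlued P o α) ⟨n, z⟩ (r : ℝ)).ncard : ℝ) := by
      have h1 : (J.card : ℝ) * (c * (t : ℝ) ^ δ) ≤ ∑ j ∈ J, ((Fj j).card : ℝ) := by
        calc (J.card : ℝ) * (c * (t : ℝ) ^ δ) = ∑ _j ∈ J, (c * (t : ℝ) ^ δ) := by
              rw [Finset.sum_const, nsmul_eq_mul]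
          _ ≤ ∑ j ∈ J, ((Fj j).card : ℝ) := Finset.sum_le_sum hterm
      have h2 : (∑ j ∈ J, ((Fj j).card : ℝ)) ≤
          ((gball (SpineGlued P o α) ⟨n, z⟩ (r : ℝ)).ncard : ℝ) := by
        have := hcount
        push_cast
        exact_mod_cast this
      linarith
    have hJcard : J.card = q + 1 := by
      rw [hJ, Nat.card_Icc]
      omega
    have hqr : (r : ℝ) ≤ 16 * (q : ℝ) := by
      have h8 : r ≤ 8 * q + 7 := by omega
      have h8' : (r : ℝ) ≤ ((8 * q + 7 : ℕ) : ℝ) := by exact_mod_cast h8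
      push_cast at h8'
      linarith
    have hqD : (q : ℝ) * (q : ℝ) ^ (D - 1) = (q : ℝ) ^ D := by
      have h1 := Real.rpow_add hq0 1 (D - 1)
      rw [Real.rpow_one] at h1
      have h2 : (1:ℝ) + (D - 1) = D := by ring
      rw [h2] at h1
      linarith
    have htδ : (q : ℝ) ^ (D - 1) / (2:ℝ) ^ δ ≤ (t : ℝ) ^ δ := by
      have h1 : ((q : ℝ) ^ α / 2) ^ δ ≤ (t : ℝ) ^ δ :=
        Real.rpow_le_rpow (by positivity) ht2 hδ0.le
      have h2 : ((q : ℝ) ^ α / 2) ^ δ = (q : ℝ) ^ (α * δ) / (2:ℝ) ^ δ := by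
        rw [Real.div_rpow (by positivity) (by norm_num), Real.rpow_mul hq0.le α δ]
      rw [hαδ] at h2
      linarith
    have hrD16 : (r : ℝ) ^ D ≤ (16:ℝ) ^ D * (q : ℝ) ^ D := by
      have h1 := Real.rpow_le_rpow (by positivity) hqr hD0.le
      rwa [Real.mul_rpow (by norm_num) hq0.le] at h1
    have hfinal : c' * (r : ℝ) ^ D ≤ (J.card : ℝ) * (c * (t : ℝ) ^ δ) := by
      have step1 : c' * (r : ℝ) ^ D ≤
          (c / ((16:ℝ) ^ D * (2:ℝ) ^ δ)) * ((16:ℝ) ^ D * (q : ℝ) ^ D) :=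
        mul_le_mul (min_le_left _ _) hrD16 (by positivity)
          (div_nonneg hc.le (mul_pos h16 h2δ).le)
      have step2 : (c / ((16:ℝ) ^ D * (2:ℝ) ^ δ)) * ((16:ℝ) ^ D * (q : ℝ) ^ D) =
          c * ((q : ℝ) * ((q : ℝ) ^ (D - 1) / (2:ℝ) ^ δ)) := by
        rw [← hqD]
        field_simp
      have step3 : c * ((q : ℝ) * ((q : ℝ) ^ (D - 1) / (2:ℝ) ^ δ)) ≤
          (q : ℝ) * (c * (t : ℝ) ^ δ) := by
        have h1 := mul_le_mul_of_nonneg_left htδ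
          (mul_nonneg hc.le hq0.le)
        linear_combination h1
      have step4 : (q : ℝ) * (c * (t : ℝ) ^ δ) ≤ (J.card : ℝ) * (c * (t : ℝ) ^ δ) := by
        apply mul_le_mul_of_nonneg_right _
          (mul_nonneg hc.le (Real.rpow_nonneg (by positivity) δ))
        rw [hJcard]
        push_cast
        linarith
      linarith
    linarith
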